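/- Let p, q be non-increasing probability vectors of dimension d, and suppose q does not majorize p and p ≠ e₁ (the vector (1,0,...,0)). Let δ = max_{n∈[d]} Σ_{x=1}^n (p_x - q_x). Then 0 < δ < 1 - q₁. -/

import Mathlib

theorem delta_bounds (d : ℕ) (hd : 1 ≤ d) (p q : ℕ → ℝ)
    (hp0 : ∀ x, 0 ≤ p x) (hq0 : ∀ x, 0 ≤ q x)
    (hp1 : ∑ x ∈ Finset.range d, p x = 1) (hq1 : ∑ x ∈ Finset.range d, q x = 1)
    (hpmono : ∀ i j, i ≤ j → j < d → p j ≤ p i)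
    (hqmono : ∀ i j, i ≤ j → j < d → q j ≤ q i)
    (hnmaj : ¬ ∀ k ∈ Finset.Icc 1 d,
        ∑ x ∈ Finset.range k, p x ≤ ∑ x ∈ Finset.range k, q x)
    (hpne : ¬ ∀ x < d, p x = if x = 0 then (1 : ℝ) else 0) :
    0 < (Finset.Icc 1 d).sup' (Finset.nonempty_Icc.mpr hd)
          (fun n => ∑ x ∈ Finset.range n, (p x - q x)) ∧
    (Finset.Icc 1 d).sup' (Finset.nonempty_Icc.mpr hd)
          (fun n => ∑ x ∈ Finset.range n, (p x - q x)) < 1 - q 0 := by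
  have hsub : ∀ n : ℕ, ∑ x ∈ Finset.range n, (p x - q x)
      = ∑ x ∈ Finset.range n, p x - ∑ x ∈ Finset.range n, q x := fun n =>
    Finset.sum_sub_distrib _ _
  have hple : ∀ n ≤ d, ∑ x ∈ Finset.range n, p x ≤ 1 := by
    intro n hn
    rw [← hp1]
    exact Finset.sum_le_sum_of_subset_of_nonneg (Finset.range_subset_range.mpr hn)
      (fun i _ _ => hp0 i)
  have hq0lt : q 0 < 1 := by
    by_contra h
    push_neg at h
    apply hnmaj
    intro k hk
    rw [Finset.mem_Icc] at hk
    have h1 : q 0 ≤ ∑ x ∈ Finset.range k, q x :=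
      Finset.single_le_sum (fun i _ => hq0 i) (Finset.mem_range.mpr hk.1)
    have := hple k hk.2
    linarith
  constructor
  · push_neg at hnmaj
    obtain ⟨k, hk, hlt⟩ := hnmaj
    calc (0:ℝ) < ∑ x ∈ Finset.range k, (p x - q x) := by rw [hsub]; linarith
      _ ≤ _ := Finset.le_sup' (fun n => ∑ x ∈ Finset.range n, (p x - q x)) hk
  · rw [Finset.sup'_lt_iff]
    intro n hn
    rw [Finset.mem_Icc] at hn
    obtain ⟨hn1, hnd⟩ := hn
    have hA := hple n hnd
    have hB : q 0 ≤ ∑ x ∈ Finset.range n, q x :=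
      Finset.single_le_sum (fun i _ => hq0 i) (Finset.mem_range.mpr hn1)
    rcases lt_or_eq_of_le hA with hA | hA
    · rw [hsub]; linarith
    · -- ∑ x ∈ range n, p x = 1
      rcases eq_or_lt_of_le hn1 with hn1' | hn2
      · -- n = 1 : then p = e₁, contradiction
        exfalso
        apply hpne
        have hp01 : p 0 = 1 := by
          rw [← hn1'] at hA; simpa using hA
        have hrest : ∑ x ∈ Finset.Ico 1 d, p x = 0 := by
          have := Finset.sum_Ico_consecutive p (Nat.zero_le 1) hd
          rw [← Finset.range_eq_Ico, ← Finset.range_eq_Ico] at this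
          have h0 : ∑ x ∈ Finset.range 1, p x = 1 := by simpa using hp01
          linarith
        intro x hx
        rcases Nat.eq_zero_or_pos x with rfl | hxpos
        · simpa using hp01
        · have hx0 : p x = 0 := by
            have := (Finset.sum_eq_zero_iff_of_nonneg
              (fun i _ => hp0 i)).mp hrest x (Finset.mem_Ico.mpr ⟨hxpos, hx⟩)
            exact this
          simp [Nat.pos_iff_ne_zero.mp hxpos, hx0]
      · -- n ≥ 2
        have hd2 : 2 ≤ d := le_trans hn2 hnd
        have hq1pos : 0 < q 1 := by
          rcases lt_or_eq_of_le (hq0 1) with h | h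
          · exact h
          · exfalso
            have hrest : ∑ x ∈ Finset.Ico 1 d, q x = 0 := by
              apply Finset.sum_eq_zero
              intro x hx
              rw [Finset.mem_Ico] at hx
              have h1 := hqmono 1 x hx.1 hx.2
              have h2 := hq0 x
              linarith
            have := Finset.sum_Ico_consecutive q (Nat.zero_le 1) hd
            rw [← Finset.range_eq_Ico, ← Finset.range_eq_Ico] at this
            have h0 : ∑ x ∈ Finset.range 1, q x = q 0 := by simp
            linarith
        have hB2 : q 0 + q 1 ≤ ∑ x ∈ Finset.range n, q x := by
          have h2 : ∑ x ∈ Finset.range 2, q x = q 0 + q 1 := by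
            simp [Finset.sum_range_succ]
          rw [← h2]
          exact Finset.sum_le_sum_of_subset_of_nonneg
            (Finset.range_subset_range.mpr hn2) (fun i _ _ => hq0 i)
        rw [hsub]
        linarith
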